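/- Let Γ be a weighted congestion game fulfilling Conditions 1–2, Γ̂ its Ψ̂-game, and ε ∈ (0,1). Suppose the profile S^(t) is not a 1/(1−ε)-approximate pure Nash equilibrium of Γ̂ and S^(t+1) is obtained from S^(t) by an Algorithm 1 step with chosen player u_t and best response s_{u_t}*. Then for every player u ∈ 𝒩, ĉ_{u_t}(S^(t)) − ĉ_{u_t}(s_{u_t}*, S^(t)_{−u_t}) ≥ (ε/μ)·ĉ_u(S^(t)), where μ = E·A·(1+d)!·N^d·W^{d+1}. -/

import Mathlib

/-- `hpoly k l` is the complete homogeneous symmetric polynomial of degree `k`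
evaluated at the entries of the list `l`, i.e. the sum of all monomials of
total degree `k` in the elements of `l`. -/
noncomputable def hpoly : ℕ → List ℝ → ℝ
  | 0, _ => 1
  | _ + 1, [] => 0
  | k + 1, a :: l => a * hpoly k (a :: l) + hpoly (k + 1) l
termination_by k l => (k, l.length)

/-- The `k`-order `Ψ̂`-function of a multiset `M` of reals:
`Ψ̂_k(M) = k! ·` (sum of all monomials of total degree `k` in the elements of `M`).
In particular `Ψ̂_0(M) = 1` and `Ψ̂_k(∅) = 0` for `k ≥ 1`. -/
noncomputable def psiHat (k : ℕ) (M : Multiset ℝ) : ℝ :=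
  (Nat.factorial k : ℝ) * hpoly k M.toList

/-- A weighted congestion game with `N` players, `E` resources, polynomial latency
functions of degree at most `d` (Condition 2, with coefficient-ratio bound `A`),
and players' weights in `[1, W]` (Condition 1). -/
structure WCGame (N E d : ℕ) (W A : ℝ) where
  /-- the strategy set of each player: a set of nonempty subsets of resources -/
  strat : Fin N → Set (Finset (Fin E))
  strat_nonempty : ∀ u, (strat u).Nonempty
  strat_valid : ∀ u, ∀ s ∈ strat u, s.Nonempty
  /-- the weight of each player -/
  w : Fin N → ℝ
  /-- `a e k` is the coefficient of `x^k` in the latency function of resource `e` -/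
  a : Fin E → ℕ → ℝ
  hd : 1 ≤ d
  hW : 1 ≤ W
  hw_lower : ∀ u, 1 ≤ w u
  hw_upper : ∀ u, w u ≤ W
  ha_nonneg : ∀ e k, 0 ≤ a e k
  ha_pos : ∀ e, 0 < ∑ k ∈ Finset.range (d + 1), a e k
  hA_pos : 0 < A
  hA_bound : ∀ e e' k k', k ≤ d → k' ≤ d → 0 < a e k → a e' k' ≤ A * a e k

namespace WCGame

/-- A (pure strategy) profile: a choice of a set of resources for every player. -/
abbrev Profile (N E : ℕ) := Fin N → Finset (Fin E)

variable {N E d : ℕ} {W A : ℝ}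

/-- A profile is feasible if every player uses one of her strategies. -/
def IsProfile (G : WCGame N E d W A) (S : Profile N E) : Prop :=
  ∀ u, S u ∈ G.strat u

/-- `U_e(S)`: the multiset of weights of the players using resource `e` in profile `S`. -/
noncomputable def load (G : WCGame N E d W A) (S : Profile N E) (e : Fin E) : Multiset ℝ :=
  (Finset.univ.filter (fun u => e ∈ S u)).val.map G.w

/-- The cost `c_u(S) = w_u · ∑_{e ∈ s_u} ∑_{k=0}^d a_{e,k} · L(U_e(S))^k` of player `u`
in the original game `Γ`. -/
noncomputable def cost (G : WCGame N E d W A) (S : Profile N E) (u : Fin N) : ℝ :=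
  G.w u * ∑ e ∈ S u, ∑ k ∈ Finset.range (d + 1), G.a e k * (G.load S e).sum ^ k

/-- The cost `ĉ_u(S) = w_u · ∑_{e ∈ s_u} ∑_{k=0}^d a_{e,k} · Ψ̂_k(U_e(S))` of player `u`
in the `Ψ̂`-game `Γ̂`. -/
noncomputable def hcost (G : WCGame N E d W A) (S : Profile N E) (u : Fin N) : ℝ :=
  G.w u * ∑ e ∈ S u, ∑ k ∈ Finset.range (d + 1), G.a e k * psiHat k (G.load S e)

/-- The potential function `Φ̂(S) = ∑_e ∑_{k=0}^d (a_{e,k}/(k+1)) · Ψ̂_{k+1}(U_e(S))`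
of the `Ψ̂`-game. -/
noncomputable def potHat (G : WCGame N E d W A) (S : Profile N E) : ℝ :=
  ∑ e : Fin E, ∑ k ∈ Finset.range (d + 1),
    G.a e k / ((k : ℝ) + 1) * psiHat (k + 1) (G.load S e)

/-- The approximate potential function `Φ(S) = ∑_e Ψ_e(L(U_e(S)))` with
`Ψ_e(x) = a_{e,0}·x + ∑_{k=1}^d a_{e,k}·(x^{k+1}/(k+1) + x^k/2)`. -/
noncomputable def pot (G : WCGame N E d W A) (S : Profile N E) : ℝ :=
  ∑ e : Fin E,
    (G.a e 0 * (G.load S e).sum +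
      ∑ k ∈ Finset.Icc 1 d,
        G.a e k * ((G.load S e).sum ^ (k + 1) / ((k : ℝ) + 1) + (G.load S e).sum ^ k / 2))

/-- `S` is a `ρ`-approximate pure Nash equilibrium w.r.t. the player costs `costFn`:
no player can decrease her cost by more than a factor `ρ` by a unilateral deviation. -/
def IsApproxPNE (G : WCGame N E d W A) (costFn : Profile N E → Fin N → ℝ) (ρ : ℝ)
    (S : Profile N E) : Prop :=
  ∀ u, ∀ s' ∈ G.strat u, costFn S u ≤ ρ * costFn (Function.update S u s') u

/-- `sstar u` is a best response of player `u` to `S₋ᵤ` w.r.t. the costs `costFn`. -/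
def IsBestResponses (G : WCGame N E d W A) (costFn : Profile N E → Fin N → ℝ)
    (S : Profile N E) (sstar : Fin N → Finset (Fin E)) : Prop :=
  ∀ u, sstar u ∈ G.strat u ∧
    ∀ s ∈ G.strat u, costFn (Function.update S u (sstar u)) u ≤ costFn (Function.update S u s) u

/-- One step of Algorithm 1 (the `1/(1-ε)` best response dynamic on the `Ψ̂`-game),
moving from profile `S` to profile `S'` by letting the chosen player `ut` (a player with a
`1/(1-ε)`-move of maximum cost reduction) switch to her best response `sstar ut`. -/
def AlgOneStep (G : WCGame N E d W A) (ε : ℝ) (S S' : Profile N E) (ut : Fin N)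
    (sstar : Fin N → Finset (Fin E)) : Prop :=
  G.IsBestResponses G.hcost S sstar ∧
  G.hcost S ut > (1 / (1 - ε)) * G.hcost (Function.update S ut (sstar ut)) ut ∧
  (∀ u, G.hcost S u > (1 / (1 - ε)) * G.hcost (Function.update S u (sstar u)) u →
    G.hcost S ut - G.hcost (Function.update S ut (sstar ut)) ut ≥
      G.hcost S u - G.hcost (Function.update S u (sstar u)) u) ∧
  S' = Function.update S ut (sstar ut)

/-- One step of Algorithm 2 (the refined `ρ/(1-ε)` best response dynamic on `Γ`),
moving from profile `S` to profile `S'` by letting the chosen player `ut` (a player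
maximizing `c_u(S) - ρ·c_u(s_u^*, S₋ᵤ)` among players with `ρ/(1-ε)`-moves) switch to
her best response `sstar ut`. -/
def AlgTwoStep (G : WCGame N E d W A) (ρ ε : ℝ) (S S' : Profile N E) (ut : Fin N)
    (sstar : Fin N → Finset (Fin E)) : Prop :=
  G.IsBestResponses G.cost S sstar ∧
  G.cost S ut > (ρ / (1 - ε)) * G.cost (Function.update S ut (sstar ut)) ut ∧
  (∀ u, G.cost S u > (ρ / (1 - ε)) * G.cost (Function.update S u (sstar u)) u →
    G.cost S ut - ρ * G.cost (Function.update S ut (sstar ut)) ut ≥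
      G.cost S u - ρ * G.cost (Function.update S u (sstar u)) u) ∧
  S' = Function.update S ut (sstar ut)

/-- `c_max`: the maximum cost of a player over all (feasible) profiles in `Γ`. -/
noncomputable def cMax (G : WCGame N E d W A) : ℝ :=
  sSup {x | ∃ S u, G.IsProfile S ∧ x = G.cost S u}

/-- `ĉ_max`: the maximum cost of a player over all (feasible) profiles in `Γ̂`. -/
noncomputable def hcMax (G : WCGame N E d W A) : ℝ :=
  sSup {x | ∃ S u, G.IsProfile S ∧ x = G.hcost S u}

/-- `Φ̂_min`: the minimum of the potential `Φ̂` over all (feasible) profiles. -/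
noncomputable def potHatMin (G : WCGame N E d W A) : ℝ :=
  sInf {x | ∃ S, G.IsProfile S ∧ x = G.potHat S}

/-- `a_min⁺`: the minimum positive coefficient of the latency functions. -/
noncomputable def aMinPos (G : WCGame N E d W A) : ℝ :=
  sInf {x | 0 < x ∧ ∃ e k, k ≤ d ∧ x = G.a e k}

end WCGame


theorem hpoly_nonneg : ∀ (k : ℕ) (l : List ℝ), (∀ x ∈ l, 0 ≤ x) → 0 ≤ hpoly k l
  | 0, l, _ => by rw [hpoly]; norm_num
  | k + 1, [], _ => by rw [hpoly]
  | k + 1, a :: l, h => by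
    have h1 := hpoly_nonneg k (a :: l) h
    have h2 := hpoly_nonneg (k + 1) l (fun x hx => h x (List.mem_cons_of_mem _ hx))
    have ha := h a (List.mem_cons_self (a := a) (l := l))
    rw [hpoly]
    positivity
  termination_by k l => (k, l.length)

theorem hpoly_ge_pow : ∀ (k : ℕ) (l : List ℝ) (x : ℝ), (∀ y ∈ l, 0 ≤ y) → x ∈ l →
    x ^ k ≤ hpoly k l
  | 0, l, x, _, _ => by rw [hpoly]; norm_num
  | k + 1, a :: l, x, h, hx => by
    have h2 := hpoly_nonneg (k + 1) l (fun y hy => h y (List.mem_cons_of_mem _ hy))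
    have ha := h a (List.mem_cons_self (a := a) (l := l))
    rw [hpoly]
    rcases List.mem_cons.1 hx with rfl | hx'
    · have h1 := hpoly_ge_pow k (x :: l) x h (List.mem_cons_self (a := x) (l := l))
      nlinarith [pow_succ x k]
    · have h1 := hpoly_ge_pow (k + 1) l x (fun y hy => h y (List.mem_cons_of_mem _ hy)) hx'
      have h3 := hpoly_nonneg k (a :: l) h
      nlinarith
  termination_by k l => (k, l.length)

theorem hpoly_le_pow_sum : ∀ (k : ℕ) (l : List ℝ), (∀ y ∈ l, 0 ≤ y) →
    hpoly k l ≤ l.sum ^ k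
  | 0, l, _ => by rw [hpoly]; norm_num
  | k + 1, [], _ => by rw [hpoly]; simp
  | k + 1, a :: l, h => by
    have ha := h a (List.mem_cons_self (a := a) (l := l))
    have hl : ∀ y ∈ l, 0 ≤ y := fun y hy => h y (List.mem_cons_of_mem _ hy)
    have hs : 0 ≤ l.sum := List.sum_nonneg hl
    have h1 := hpoly_le_pow_sum k (a :: l) h
    have h2 := hpoly_le_pow_sum (k + 1) l hl
    rw [hpoly, List.sum_cons]
    have hps : l.sum ^ (k + 1) ≤ l.sum * (a + l.sum) ^ k := by
      rw [pow_succ']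
      exact mul_le_mul_of_nonneg_left (pow_le_pow_left₀ hs (by linarith) k) hs
    have h1' : a * hpoly k (a :: l) ≤ a * (a + l.sum) ^ k := by
      apply mul_le_mul_of_nonneg_left _ ha
      simpa [List.sum_cons] using h1
    calc a * hpoly k (a :: l) + hpoly (k + 1) l ≤ a * (a + l.sum) ^ k + l.sum ^ (k+1) := by
          linarith
      _ ≤ a * (a + l.sum) ^ k + l.sum * (a + l.sum) ^ k := by linarith
      _ = (a + l.sum) ^ (k + 1) := by ring
  termination_by k l => (k, l.length)

theorem psiHat_nonneg' (k : ℕ) (M : Multiset ℝ) (h : ∀ x ∈ M, 0 ≤ x) : 0 ≤ psiHat k M := by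
  have := hpoly_nonneg k M.toList (fun x hx => h x (Multiset.mem_toList.1 hx))
  unfold psiHat
  positivity

theorem psiHat_ge_one (k : ℕ) (M : Multiset ℝ) (x : ℝ) (h : ∀ y ∈ M, 0 ≤ y)
    (hx : x ∈ M) (hx1 : 1 ≤ x) : 1 ≤ psiHat k M := by
  have h1 := hpoly_ge_pow k M.toList x (fun y hy => h y (Multiset.mem_toList.1 hy))
    (Multiset.mem_toList.2 hx)
  have h2 : (1 : ℝ) ≤ x ^ k := one_le_pow₀ hx1
  have h3 : (1 : ℝ) ≤ (Nat.factorial k : ℝ) := by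
    exact_mod_cast Nat.one_le_iff_ne_zero.2 (Nat.factorial_ne_zero k)
  unfold psiHat
  nlinarith

theorem psiHat_le_sum_pow (k : ℕ) (M : Multiset ℝ) (h : ∀ x ∈ M, 0 ≤ x) :
    psiHat k M ≤ (Nat.factorial k : ℝ) * M.sum ^ k := by
  have h1 := hpoly_le_pow_sum k M.toList (fun x hx => h x (Multiset.mem_toList.1 hx))
  rw [Multiset.sum_toList] at h1
  unfold psiHat
  have : (0:ℝ) ≤ (Nat.factorial k : ℝ) := by positivity
  nlinarith

section AuxGame

variable {N E d : ℕ} {W A : ℝ}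

theorem load_mem_nonneg (G : WCGame N E d W A) (S : WCGame.Profile N E) (e : Fin E) :
    ∀ x ∈ G.load S e, (0:ℝ) ≤ x := by
  intro x hx
  obtain ⟨v, _, rfl⟩ := Multiset.mem_map.1 hx
  linarith [G.hw_lower v]

theorem load_sum_le (G : WCGame N E d W A) (S : WCGame.Profile N E) (e : Fin E) :
    (G.load S e).sum ≤ (N : ℝ) * W := by
  have hW0 : (0:ℝ) ≤ W := by linarith [G.hW]
  have h1 : (G.load S e).sum = ∑ v ∈ Finset.univ.filter (fun u => e ∈ S u), G.w v := rfl
  rw [h1]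
  calc ∑ v ∈ Finset.univ.filter (fun u => e ∈ S u), G.w v
      ≤ (Finset.univ.filter (fun u => e ∈ S u)).card • W :=
        Finset.sum_le_card_nsmul _ _ W (fun v _ => G.hw_upper v)
    _ = ((Finset.univ.filter (fun u => e ∈ S u)).card : ℝ) * W := nsmul_eq_mul _ _
    _ ≤ (N : ℝ) * W := by
        apply mul_le_mul_of_nonneg_right _ hW0
        exact_mod_cast (Finset.card_filter_le _ _).trans (by simp)

theorem weight_mem_load (G : WCGame N E d W A) (S : WCGame.Profile N E) (e : Fin E)
    (u : Fin N) (h : e ∈ S u) : G.w u ∈ G.load S e :=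
  Multiset.mem_map.2 ⟨u, by simp [Finset.mem_val, h], rfl⟩

theorem hcost_nonneg (G : WCGame N E d W A) (T : WCGame.Profile N E) (v : Fin N) :
    0 ≤ G.hcost T v := by
  unfold WCGame.hcost
  apply mul_nonneg (by linarith [G.hw_lower v])
  apply Finset.sum_nonneg
  intro e _
  apply Finset.sum_nonneg
  intro k _
  exact mul_nonneg (G.ha_nonneg e k) (psiHat_nonneg' k _ (load_mem_nonneg G T e))

end AuxGame

open WCGame in
/-- Lemma 8: if `S` is not a `1/(1−ε)`-approximate pure Nash equilibrium of `Γ̂` and `S'`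
is obtained from `S` by an Algorithm 1 step with chosen player `ut` and best response
`sstar ut`, then for every player `u`,
`ĉ_{ut}(S) − ĉ_{ut}(s*_{ut}, S₋_{ut}) ≥ (ε/μ)·ĉ_u(S)` with `μ = E·A·(1+d)!·N^d·W^{d+1}`. -/
theorem algOne_step_decrement_general {N E d : ℕ} {W A : ℝ}
    (G : WCGame N E d W A) (ε : ℝ) (hε0 : 0 < ε) (hε1 : ε < 1)
    (S S' : Profile N E) (hS : G.IsProfile S)
    (hnot : ¬ G.IsApproxPNE G.hcost (1 / (1 - ε)) S)
    (ut : Fin N) (sstar : Fin N → Finset (Fin E))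
    (hstep : G.AlgOneStep ε S S' ut sstar) :
    ∀ u : Fin N, G.hcost S ut - G.hcost (Function.update S ut (sstar ut)) ut ≥
      ε / ((E : ℝ) * A * (Nat.factorial (1 + d) : ℝ) * (N : ℝ) ^ d * W ^ (d + 1)) *
        G.hcost S u := by
  intro u
  obtain ⟨hBR, hgt, hmax, hS'⟩ := hstep
  have h1e : 0 < 1 - ε := by linarith
  -- the decrement is at least ε · ĉ_{ut}(S)
  have hdec : G.hcost S ut - G.hcost (Function.update S ut (sstar ut)) ut ≥
      ε * G.hcost S ut := by
    rw [gt_iff_lt, div_mul_eq_mul_div, one_mul, div_lt_iff₀ h1e] at hgt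
    nlinarith
  -- a resource used by ut and a positive coefficient on it
  obtain ⟨e0, he0⟩ := G.strat_valid ut (S ut) (hS ut)
  obtain ⟨k0, hk0mem, hk0pos⟩ : ∃ k ∈ Finset.range (d + 1), 0 < G.a e0 k := by
    by_contra hcon
    push_neg at hcon
    have hle : ∑ k ∈ Finset.range (d + 1), G.a e0 k ≤ 0 :=
      Finset.sum_nonpos (fun k hk => hcon k hk)
    linarith [G.ha_pos e0]
  have hk0d : k0 ≤ d := by
    have := Finset.mem_range.1 hk0mem
    omega
  -- basic positivity facts
  have hNpos : 0 < N := ut.pos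
  have hN1 : (1:ℝ) ≤ (N:ℝ) := by exact_mod_cast hNpos
  have hW0 : (0:ℝ) ≤ W := by linarith [G.hW]
  have hNW1 : (1:ℝ) ≤ (N:ℝ) * W := one_le_mul_of_one_le_of_one_le hN1 G.hW
  have hEpos : 0 < E := e0.pos
  have hE1 : (1:ℝ) ≤ (E:ℝ) := by exact_mod_cast hEpos
  have hfacpos : (0:ℝ) < (Nat.factorial (1 + d) : ℝ) := by
    exact_mod_cast Nat.factorial_pos (1 + d)
  have hμpos : 0 < (E : ℝ) * A * (Nat.factorial (1 + d) : ℝ) * (N : ℝ) ^ d * W ^ (d + 1) := by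
    have hA := G.hA_pos
    have hNr : (0:ℝ) < (N:ℝ) := by exact_mod_cast hNpos
    have hEr : (0:ℝ) < (E:ℝ) := by exact_mod_cast hEpos
    have hWr : (0:ℝ) < W := by linarith [G.hW]
    positivity
  -- lower bound: a_{e0,k0} ≤ ĉ_{ut}(S)
  have hlow : G.a e0 k0 ≤ G.hcost S ut := by
    have hpsi1 : 1 ≤ psiHat k0 (G.load S e0) :=
      psiHat_ge_one k0 _ (G.w ut) (load_mem_nonneg G S e0)
        (weight_mem_load G S e0 ut he0) (G.hw_lower ut)
    have hterm : G.a e0 k0 ≤ ∑ k ∈ Finset.range (d + 1), G.a e0 k * psiHat k (G.load S e0) := by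
      calc G.a e0 k0 ≤ G.a e0 k0 * psiHat k0 (G.load S e0) := by nlinarith
        _ ≤ ∑ k ∈ Finset.range (d + 1), G.a e0 k * psiHat k (G.load S e0) :=
            Finset.single_le_sum (fun k _ => mul_nonneg (G.ha_nonneg e0 k)
              (psiHat_nonneg' k _ (load_mem_nonneg G S e0))) hk0mem
    have hsum : ∑ k ∈ Finset.range (d + 1), G.a e0 k * psiHat k (G.load S e0) ≤
        ∑ e ∈ S ut, ∑ k ∈ Finset.range (d + 1), G.a e k * psiHat k (G.load S e) :=
      Finset.single_le_sum (fun e _ => Finset.sum_nonneg (fun k _ =>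
        mul_nonneg (G.ha_nonneg e k) (psiHat_nonneg' k _ (load_mem_nonneg G S e)))) he0
    have hw1 := G.hw_lower ut
    unfold WCGame.hcost
    nlinarith
  -- upper bound: ĉ_u(S) ≤ μ · a_{e0,k0}
  have hup : G.hcost S u ≤
      (E : ℝ) * A * (Nat.factorial (1 + d) : ℝ) * (N : ℝ) ^ d * W ^ (d + 1) * G.a e0 k0 := by
    have hbound : ∀ e : Fin E, ∑ k ∈ Finset.range (d + 1), G.a e k * psiHat k (G.load S e) ≤
        A * G.a e0 k0 * ((Nat.factorial (1 + d) : ℝ) * ((N:ℝ) * W) ^ d) := by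
      intro e
      have hterm : ∀ k ∈ Finset.range (d + 1), G.a e k * psiHat k (G.load S e) ≤
          A * G.a e0 k0 * ((Nat.factorial d : ℝ) * ((N:ℝ) * W) ^ d) := by
        intro k hk
        have hkd : k ≤ d := by have := Finset.mem_range.1 hk; omega
        have ha_le : G.a e k ≤ A * G.a e0 k0 := G.hA_bound e0 e k0 k hk0d hkd hk0pos
        have hpsi_le : psiHat k (G.load S e) ≤ (Nat.factorial d : ℝ) * ((N:ℝ) * W) ^ d := by
          calc psiHat k (G.load S e) ≤ (Nat.factorial k : ℝ) * (G.load S e).sum ^ k :=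
                psiHat_le_sum_pow k _ (load_mem_nonneg G S e)
            _ ≤ (Nat.factorial d : ℝ) * ((N:ℝ) * W) ^ d := by
                have hsnn : 0 ≤ (G.load S e).sum :=
                  Multiset.sum_nonneg (load_mem_nonneg G S e)
                have h1 : (G.load S e).sum ^ k ≤ ((N:ℝ) * W) ^ k :=
                  pow_le_pow_left₀ hsnn (load_sum_le G S e) k
                have h2 : ((N:ℝ) * W) ^ k ≤ ((N:ℝ) * W) ^ d :=
                  pow_le_pow_right₀ hNW1 hkd
                have h3 : (Nat.factorial k : ℝ) ≤ (Nat.factorial d : ℝ) := by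
                  exact_mod_cast Nat.factorial_le hkd
                have h4 : (0:ℝ) ≤ (Nat.factorial k : ℝ) := by positivity
                have h5 : (0:ℝ) ≤ ((N:ℝ) * W) ^ d := by positivity
                nlinarith
        have hpnn : 0 ≤ psiHat k (G.load S e) :=
          psiHat_nonneg' k _ (load_mem_nonneg G S e)
        have hAann : 0 ≤ A * G.a e0 k0 := le_of_lt (mul_pos G.hA_pos hk0pos)
        exact mul_le_mul ha_le hpsi_le hpnn hAann
      calc ∑ k ∈ Finset.range (d + 1), G.a e k * psiHat k (G.load S e)
          ≤ ∑ _k ∈ Finset.range (d + 1),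
            A * G.a e0 k0 * ((Nat.factorial d : ℝ) * ((N:ℝ) * W) ^ d) :=
            Finset.sum_le_sum hterm
        _ = ((d:ℝ) + 1) * (A * G.a e0 k0 * ((Nat.factorial d : ℝ) * ((N:ℝ) * W) ^ d)) := by
            rw [Finset.sum_const, Finset.card_range, nsmul_eq_mul]
            push_cast
            ring
        _ = A * G.a e0 k0 * ((((d:ℝ) + 1) * (Nat.factorial d : ℝ)) * ((N:ℝ) * W) ^ d) := by
            ring
        _ = A * G.a e0 k0 * ((Nat.factorial (1 + d) : ℝ) * ((N:ℝ) * W) ^ d) := by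
            congr 2
            rw [Nat.add_comm 1 d, Nat.factorial_succ]
            push_cast
            ring
    have hsum : ∑ e ∈ S u, ∑ k ∈ Finset.range (d + 1), G.a e k * psiHat k (G.load S e) ≤
        (E : ℝ) * (A * G.a e0 k0 * ((Nat.factorial (1 + d) : ℝ) * ((N:ℝ) * W) ^ d)) := by
      calc ∑ e ∈ S u, ∑ k ∈ Finset.range (d + 1), G.a e k * psiHat k (G.load S e)
          ≤ (S u).card • (A * G.a e0 k0 * ((Nat.factorial (1 + d) : ℝ) * ((N:ℝ) * W) ^ d)) :=
            Finset.sum_le_card_nsmul _ _ _ (fun e _ => hbound e)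
        _ = ((S u).card : ℝ) * (A * G.a e0 k0 * ((Nat.factorial (1 + d) : ℝ) * ((N:ℝ) * W) ^ d)) :=
            nsmul_eq_mul _ _
        _ ≤ (E : ℝ) * (A * G.a e0 k0 * ((Nat.factorial (1 + d) : ℝ) * ((N:ℝ) * W) ^ d)) := by
            apply mul_le_mul_of_nonneg_right
            · exact_mod_cast (Finset.card_le_univ (S u)).trans (by simp)
            · have := G.hA_pos
              positivity
    have hwu := G.hw_upper u
    have hwu1 := G.hw_lower u
    have hsnn : 0 ≤ ∑ e ∈ S u, ∑ k ∈ Finset.range (d + 1), G.a e k * psiHat k (G.load S e) :=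
      Finset.sum_nonneg (fun e _ => Finset.sum_nonneg (fun k _ =>
        mul_nonneg (G.ha_nonneg e k) (psiHat_nonneg' k _ (load_mem_nonneg G S e))))
    unfold WCGame.hcost
    calc G.w u * ∑ e ∈ S u, ∑ k ∈ Finset.range (d + 1), G.a e k * psiHat k (G.load S e)
        ≤ W * ((E : ℝ) * (A * G.a e0 k0 * ((Nat.factorial (1 + d) : ℝ) * ((N:ℝ) * W) ^ d))) := by
          apply mul_le_mul hwu hsum hsnn hW0
      _ = (E : ℝ) * A * (Nat.factorial (1 + d) : ℝ) * ((N : ℝ) ^ d * W ^ d) * (W * G.a e0 k0) := by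
          rw [mul_pow]
          ring
      _ = (E : ℝ) * A * (Nat.factorial (1 + d) : ℝ) * (N : ℝ) ^ d * W ^ (d + 1) * G.a e0 k0 := by
          rw [pow_succ]
          ring
  -- conclude
  have hεμ : 0 ≤ ε / ((E : ℝ) * A * (Nat.factorial (1 + d) : ℝ) * (N : ℝ) ^ d * W ^ (d + 1)) :=
    div_nonneg (le_of_lt hε0) (le_of_lt hμpos)
  calc ε / ((E : ℝ) * A * (Nat.factorial (1 + d) : ℝ) * (N : ℝ) ^ d * W ^ (d + 1)) *
        G.hcost S u
      ≤ ε / ((E : ℝ) * A * (Nat.factorial (1 + d) : ℝ) * (N : ℝ) ^ d * W ^ (d + 1)) *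
        ((E : ℝ) * A * (Nat.factorial (1 + d) : ℝ) * (N : ℝ) ^ d * W ^ (d + 1) * G.a e0 k0) :=
        mul_le_mul_of_nonneg_left hup hεμ
    _ = ε * G.a e0 k0 := by
        rw [← mul_assoc, div_mul_cancel₀ ε hμpos.ne']
    _ ≤ ε * G.hcost S ut := by nlinarith
    _ ≤ G.hcost S ut - G.hcost (Function.update S ut (sstar ut)) ut := hdec
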